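/- Let C₁, C₂ ≥ 0, C_ζ > 0, C_η > 0, 0 < a ≤ 1, and b ∈ ℝ with C_η > 1 + b − a and (b − a) ∉ [−1, 0]. Set η_t = C_η / t^a and ζ_t = C_ζ / t^b for integers t ≥ 1. If (A_t)_{t≥1} is a sequence of nonnegative reals satisfying A_{t+1} ≤ (1 − η_t + C₁ η_t²) A_t + C₂ ζ_t for all t ≥ 1, then there exists a constant C_A > 0 such that A_t ≤ C_A / t^{b−a} for all t ≥ 1. -/

import Mathlib

lemma bern_neg {s p : ℝ} (hs : 0 ≤ s) (hp : p ≤ 0) : 1 + p * s ≤ (1 + s) ^ p := by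
  have h1s : (0:ℝ) < 1 + s := by linarith
  rcases le_or_gt (-p) 1 with hq | hq
  · have h := rpow_one_add_le_one_add_mul_self (show (-1:ℝ) ≤ s by linarith)
      (show (0:ℝ) ≤ -p by linarith) hq
    have hpos : 0 < (1+s) ^ (-p) := Real.rpow_pos_of_pos h1s _
    have hq0 : 0 ≤ (-p) * s := mul_nonneg (by linarith) hs
    have h3 : (0:ℝ) < 1 + (-p) * s := by linarith
    have ha : 1 + p * s ≤ (1 + (-p) * s)⁻¹ := by
      rw [inv_eq_one_div, le_div_iff₀ h3]
      nlinarith [sq_nonneg (p * s)]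
    have hb : (1 + (-p) * s)⁻¹ ≤ ((1+s) ^ (-p))⁻¹ := inv_anti₀ hpos h
    calc 1 + p * s ≤ ((1+s) ^ (-p))⁻¹ := le_trans ha hb
      _ = (1+s) ^ p := by rw [Real.rpow_neg h1s.le, inv_inv]
  · set u := -s / (1+s) with hu_def
    have hu : -1 ≤ u := by
      rw [hu_def, neg_div, neg_le_neg_iff, div_le_one h1s]
      linarith
    have h := one_add_mul_self_le_rpow_one_add hu (le_of_lt hq)
    have h1u : 1 + u = (1+s)⁻¹ := by
      rw [hu_def]; field_simp; ring
    have hrw : (1+u) ^ (-p) = (1+s) ^ p := by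
      rw [h1u, Real.inv_rpow h1s.le, Real.rpow_neg h1s.le, inv_inv]
    have hmu : (-p) * u = p * s / (1+s) := by
      rw [hu_def]; ring
    have hps : p * (s*s) ≤ 0 := mul_nonpos_of_nonpos_of_nonneg hp (mul_nonneg hs hs)
    have hkey : p * s ≤ p * s / (1+s) := by
      rw [le_div_iff₀ h1s]; nlinarith
    calc 1 + p * s ≤ 1 + (-p) * u := by rw [hmu]; linarith
      _ ≤ (1+u) ^ (-p) := h
      _ = (1+s) ^ p := hrw

/-- Lemma 3: decay estimate for sequences satisfying a linear one-step recurrence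
with polynomially decaying contraction factor `η_t = C_η/t^a` and forcing `ζ_t = C_ζ/t^b`. -/
theorem stmt_1 (C₁ C₂ Cζ Cη a b : ℝ)
    (hC₁ : 0 ≤ C₁) (hC₂ : 0 ≤ C₂) (hCζ : 0 < Cζ) (hCη : 0 < Cη)
    (ha0 : 0 < a) (ha1 : a ≤ 1)
    (hCη' : 1 + b - a < Cη) (hba : (b - a) ∉ Set.Icc (-1 : ℝ) 0)
    (A : ℕ → ℝ) (hA : ∀ t : ℕ, 1 ≤ t → 0 ≤ A t)
    (hrec : ∀ t : ℕ, 1 ≤ t →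
      A (t + 1) ≤ (1 - Cη / (t : ℝ) ^ a + C₁ * (Cη / (t : ℝ) ^ a) ^ 2) * A t
        + C₂ * (Cζ / (t : ℝ) ^ b)) :
    ∃ C_A : ℝ, 0 < C_A ∧ ∀ t : ℕ, 1 ≤ t → A t ≤ C_A / (t : ℝ) ^ (b - a) := by
  set c : ℝ := b - a with hc_def
  have hc : c < -1 ∨ 0 < c := by
    simp only [Set.mem_Icc, not_and_or, not_le] at hba
    rcases hba with h | h
    · exact Or.inl h
    · exact Or.inr h
  clear_value c
  set M : ℝ := max c 0 with hM_def
  have hM0 : 0 ≤ M := le_max_right _ _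
  have hcM : c ≤ M := le_max_left _ _
  set δ : ℝ := min Cη 1 with hδ_def
  have hδ : 0 < δ := lt_min hCη one_pos
  have hδ1 : δ ≤ 1 := min_le_right _ _
  have hδM : δ ≤ Cη - M := by
    rcases le_or_gt c 0 with h | h
    · rw [hM_def, max_eq_right h]
      have := min_le_left Cη 1
      linarith
    · rw [hM_def, max_eq_left h.le]
      have : 1 + c < Cη := by rw [hc_def]; linarith
      linarith
  set R : ℝ := max (2*C₁*Cη^2/δ) Cη with hR_def
  have hR : 0 < R := lt_of_lt_of_le hCη (le_max_right _ _)
  set T₀ : ℕ := ⌈R ^ (1/a)⌉₊ + 1 with hT₀_def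
  have hT₀1 : 1 ≤ T₀ := Nat.le_add_left 1 _
  have hT₀R : R ≤ (T₀ : ℝ) ^ a := by
    have h1 : R ^ (1/a) ≤ (T₀ : ℝ) := by
      have := Nat.le_ceil (R ^ (1/a))
      push_cast [hT₀_def]
      linarith
    calc R = (R ^ (1/a)) ^ a := by
            rw [← Real.rpow_mul hR.le, one_div, inv_mul_cancel₀ ha0.ne', Real.rpow_one]
      _ ≤ (T₀ : ℝ) ^ a := Real.rpow_le_rpow (Real.rpow_nonneg hR.le _) h1 ha0.le
  clear_value M δ R T₀
  set S : ℝ := ∑ t ∈ Finset.Icc 1 T₀, A t * (t : ℝ) ^ c with hS_def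
  have hS : 0 ≤ S := Finset.sum_nonneg fun t ht =>
    mul_nonneg (hA t (Finset.mem_Icc.mp ht).1) (Real.rpow_nonneg (Nat.cast_nonneg t) _)
  set CA : ℝ := 2*C₂*Cζ/δ + 1 + S with hCA_def
  have hCAl : 2*C₂*Cζ/δ ≤ CA := by
    rw [hCA_def]; linarith
  have hCA : 0 < CA := by
    have : 0 ≤ 2*C₂*Cζ/δ := by positivity
    rw [hCA_def]; linarith
  clear_value S CA
  refine ⟨CA, hCA, ?_⟩
  have hsmall : ∀ t : ℕ, 1 ≤ t → t ≤ T₀ → A t ≤ CA / (t:ℝ)^c := by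
    intro t ht1 ht2
    have htpos : (0:ℝ) < (t:ℝ)^c := Real.rpow_pos_of_pos (by exact_mod_cast ht1) _
    rw [le_div_iff₀ htpos]
    have hmem : t ∈ Finset.Icc 1 T₀ := Finset.mem_Icc.mpr ⟨ht1, ht2⟩
    have hterm := Finset.single_le_sum (f := fun t => A t * (t:ℝ)^c)
      (fun i hi => mul_nonneg (hA i (Finset.mem_Icc.mp hi).1)
        (Real.rpow_nonneg (Nat.cast_nonneg i) _)) hmem
    have h0 : 0 ≤ 2*C₂*Cζ/δ := by positivity
    rw [hCA_def]
    rw [← hS_def] at hterm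
    linarith
  have hstep : ∀ t : ℕ, T₀ ≤ t → A t ≤ CA / (t:ℝ)^c → A (t+1) ≤ CA / ((t:ℝ)+1)^c := by
    intro t hTt hprev
    have ht1 : 1 ≤ t := le_trans hT₀1 hTt
    set x : ℝ := (t : ℝ) with hx_def
    have hx1 : (1:ℝ) ≤ x := by rw [hx_def]; exact_mod_cast ht1
    have hx0 : (0:ℝ) < x := by linarith
    set p : ℝ := x ^ a with hp_def
    have hp0 : 0 < p := Real.rpow_pos_of_pos hx0 _
    have hpR : R ≤ p := by
      refine le_trans hT₀R ?_
      rw [hp_def, hx_def]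
      exact Real.rpow_le_rpow (Nat.cast_nonneg T₀) (by exact_mod_cast hTt) ha0.le
    have hpCη : Cη ≤ p := le_trans (by rw [hR_def]; exact le_max_right _ _) hpR
    have hp2 : 2*C₁*Cη^2/δ ≤ p := le_trans (by rw [hR_def]; exact le_max_left _ _) hpR
    have hpx : p ≤ x := by
      calc p = x ^ a := hp_def
        _ ≤ x ^ (1:ℝ) := Real.rpow_le_rpow_of_exponent_le hx1 ha1
        _ = x := Real.rpow_one x
    have hq0 : (0:ℝ) < x ^ c := Real.rpow_pos_of_pos hx0 _
    have hxb : x ^ b = x ^ c * p := by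
      rw [hp_def, ← Real.rpow_add hx0]
      congr 1
      rw [hc_def]; ring
    clear_value x p
    have hf0 : 0 ≤ 1 - Cη/p + C₁*(Cη/p)^2 := by
      have hη1 : Cη / p ≤ 1 := (div_le_one hp0).mpr hpCη
      have hη0 : 0 ≤ C₁*(Cη/p)^2 := mul_nonneg hC₁ (sq_nonneg _)
      linarith
    have h1 : A (t+1) ≤ (1 - Cη/p + C₁*(Cη/p)^2) * (CA / x^c) + C₂*Cζ/(x^c * p) := by
      have hr := hrec t ht1
      rw [← hx_def, ← hp_def] at hr
      have h2 : (1 - Cη/p + C₁*(Cη/p)^2) * A t ≤ (1 - Cη/p + C₁*(Cη/p)^2) * (CA / x^c) :=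
        mul_le_mul_of_nonneg_left hprev hf0
      have h3 : C₂ * (Cζ / x^b) = C₂*Cζ/(x^c * p) := by rw [hxb]; ring
      rw [h3] at hr
      linarith
    have hcore : ((p^2 - Cη*p + C₁*Cη^2)*CA)*x + C₂*Cζ*(p*x) ≤ CA*(x-c)*p^2 := by
      have F1 : 2*C₁*Cη^2 ≤ δ * p := by
        rw [div_le_iff₀ hδ] at hp2; linarith
      have F2 : c*p ≤ M*x := by
        have h1' : c*p ≤ M*p := mul_le_mul_of_nonneg_right hcM hp0.le
        have h2' : M*p ≤ M*x := mul_le_mul_of_nonneg_left hpx hM0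
        linarith
      have F3 : 2*C₂*Cζ ≤ δ*CA := by
        rw [div_le_iff₀ hδ] at hCAl; linarith
      have F4 : δ + M ≤ Cη := by linarith
      have ha' := mul_le_mul_of_nonneg_right F1 (mul_nonneg hCA.le hx0.le)
      have hb' := mul_le_mul_of_nonneg_right F3 (mul_nonneg hp0.le hx0.le)
      have hc' := mul_le_mul_of_nonneg_right F2 (mul_nonneg hCA.le hp0.le)
      have hd' := mul_le_mul_of_nonneg_right F4
        (mul_nonneg (mul_nonneg hCA.le hp0.le) hx0.le)
      linarith [ha', hb', hc', hd']
    -- step 3: Bernoulli comparison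
    have hx10 : (0:ℝ) < 1 + 1/x := by positivity
    have hxinv : (0:ℝ) ≤ 1/x := by positivity
    have hbern : 1 + (-c)*(1/x) ≤ (1 + 1/x) ^ (-c) := by
      rcases hc with h | h
      · exact one_add_mul_self_le_rpow_one_add (by linarith) (by linarith)
      · exact bern_neg hxinv (by linarith)
    have hsplit : (x+1) ^ (-c) = x ^ (-c) * (1+1/x) ^ (-c) := by
      rw [← Real.mul_rpow hx0.le hx10.le]
      congr 1
      field_simp
    have hxc : x ^ (-c) = (x ^ c)⁻¹ := Real.rpow_neg hx0.le c
    have h3 : (CA/x^c) * (1 - c/x) ≤ CA / (x+1)^c := by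
      have hr1 : CA / (x+1)^c = CA * (x+1)^(-c) := by
        rw [Real.rpow_neg (by linarith), div_eq_mul_inv]
      have hr2 : CA * (x^(-c) * (1 + (-c)*(1/x))) ≤ CA * (x^(-c) * (1+1/x)^(-c)) := by
        apply mul_le_mul_of_nonneg_left _ hCA.le
        exact mul_le_mul_of_nonneg_left hbern (Real.rpow_nonneg hx0.le _)
      have hr3 : (CA/x^c) * (1 - c/x) = CA * (x^(-c) * (1 + (-c)*(1/x))) := by
        rw [hxc]; ring
      rw [hr1, hsplit, hr3]
      exact hr2
    -- combine
    have h2 : (1 - Cη/p + C₁*(Cη/p)^2) * (CA / x^c) + C₂*Cζ/(x^c * p)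
        ≤ (CA/x^c) * (1 - c/x) := by
      have hden : (0:ℝ) < x^c * p^2 * x := by positivity
      have hL : (1 - Cη/p + C₁*(Cη/p)^2) * (CA / x^c) + C₂*Cζ/(x^c * p)
          = (((p^2 - Cη*p + C₁*Cη^2)*CA)*x + C₂*Cζ*(p*x)) / (x^c * p^2 * x) := by
        field_simp
      have hR : (CA/x^c) * (1 - c/x) = (CA*(x-c)*p^2) / (x^c * p^2 * x) := by
        field_simp
      rw [hL, hR]
      exact div_le_div_of_nonneg_right hcore hden.le
    linarith
  intro t ht1
  have hall : ∀ s : ℕ, T₀ ≤ s → A s ≤ CA/(s:ℝ)^c := by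
    intro s hs
    induction s, hs using Nat.le_induction with
    | base => exact hsmall T₀ hT₀1 le_rfl
    | succ n hn ih =>
      have := hstep n hn ih
      push_cast
      exact this
  rcases le_or_gt t T₀ with h | h
  · exact hsmall t ht1 h
  · exact hall t h.le
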